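/- Lyapunov functions from Morse-type estimates: let Ω ⊂ ℝ^d, let H : Ω → ℝ, and suppose V : ℝ^d → ℝ defined by V(x) = exp(H(x)/2) for x ∈ Ω and V(x) = 0 for x ∉ Ω is twice continuously differentiable. Let B ⊂ Ω be a bounded region, let λ₀ > 0, and suppose (1/2)ΔH(x) − (1/4)‖∇H(x)‖² ≤ −λ₀ for all x ∈ Ω∖B. Let ν be the density proportional to exp(−H(x)) on Ω and equal to 0 off Ω, and set h = sup_{x∈B} (−(1/4)‖∇H(x)‖² + (1/2)ΔH(x) + λ₀)·V(x). Then for every x ∈ Ω, L_ν V(x) = (−(1/4)‖∇H(x)‖² + (1/2)ΔH(x))·V(x) ≤ −λ₀ V(x) + h·1_B(x); that is, V is a (λ₀, h, B, C)-Lyapunov function for ν with C = sup_{x∈B} ν(x) / inf_{x∈B} ν(x). -/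

import Mathlib

open MeasureTheory RealInnerProductSpace

noncomputable section

abbrev Euc (d : ℕ) := EuclideanSpace ℝ (Fin d)

def IsDensity {d : ℕ} (ρ : Euc d → ℝ) : Prop :=
  (∀ x, 0 ≤ ρ x) ∧ ∫ x, ρ x = 1

def lap {d : ℕ} (f : Euc d → ℝ) (x : Euc d) : ℝ :=
  ∑ i : Fin d, fderiv ℝ (fun y => fderiv ℝ f y (EuclideanSpace.single i 1)) x (EuclideanSpace.single i 1)

def LGen {d : ℕ} (ν V : Euc d → ℝ) (x : Euc d) : ℝ :=
  ⟪gradient V x, gradient (fun y => Real.log (ν y)) x⟫ + lap V x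

structure IsLyapunov {d : ℕ} (ν V : Euc d → ℝ) (lam h : ℝ) (B : Set (Euc d)) (C : ℝ) : Prop where
  contDiff : ContDiff ℝ 2 V
  one_le : ∀ x, 1 ≤ V x
  lam_pos : 0 < lam
  h_pos : 0 < h
  C_pos : 0 < C
  bounded : Bornology.IsBounded B
  drift : ∀ x, LGen ν V x ≤ -lam * V x + h * B.indicator 1 x
  ratio : ∀ x ∈ B, ∀ y ∈ B, ν x ≤ C * ν y

def uball {d : ℕ} (x₀ : Euc d) (R : ℝ) (x : Euc d) : ℝ :=
  (Metric.closedBall x₀ R).indicator (fun _ => ((volume (Metric.closedBall x₀ R)).toReal)⁻¹) x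

def IsLyDensity {d : ℕ} (ν : Euc d → ℝ) (x₀ : Euc d) (R q a : ℝ) : Prop :=
  ∃ V lam h C, IsLyapunov ν V lam h (Metric.closedBall x₀ R) C ∧
    (1 + h * R ^ 2 * C ^ 2) / lam ≤ q ∧
    ∀ x ∈ Metric.closedBall x₀ R, uball x₀ R x ≤ a * ν x

def Vball (d : ℕ) : ℝ := (volume (Metric.closedBall (0 : Euc d) 1)).toReal

def IsLogConcave {d : ℕ} (ν : Euc d → ℝ) (c L : ℝ) : Prop :=
  ContDiff ℝ 2 (fun x => -Real.log (ν x)) ∧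
  (∀ x y : Euc d, c * ‖x - y‖ ^ 2 ≤
      ⟪gradient (fun z => -Real.log (ν z)) x - gradient (fun z => -Real.log (ν z)) y, x - y⟫) ∧
  (∀ x : Euc d, ‖fderiv ℝ (fun z => gradient (fun w => -Real.log (ν w)) z) x‖ ≤ L)

def GammaR {d : ℕ} (π πy : Euc d → ℝ) (τ ρ : ℝ) (f : Euc d × Euc d → ℝ) (x y : Euc d) : ℝ :=
  ‖gradient (fun x' => f (x', y)) x‖ ^ 2 + τ * ‖gradient (fun y' => f (x, y')) y‖ ^ 2 +
    (ρ / 2) * min 1 (π y * πy x / (π x * πy y)) * (f (y, x) - f (x, y)) ^ 2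



private lemma morse_norm_sq_eq {d : ℕ} (g : Euc d) :
    ‖g‖ ^ 2 = ∑ i : Fin d, (⟪g, EuclideanSpace.single i 1⟫) ^ 2 := by
  rw [← real_inner_self_eq_norm_sq]
  simp [PiLp.inner_apply, EuclideanSpace.inner_single_right, sq]
  rw [← real_inner_self_eq_norm_mul_norm, PiLp.inner_apply]
  simp [sq]

private lemma morse_inner_grad {d : ℕ} (f : Euc d → ℝ) (x v : Euc d) :
    ⟪gradient f x, v⟫ = fderiv ℝ f x v := by
  rw [gradient]; exact InnerProductSpace.toDual_symm_apply

private lemma morse_hasFDerivV {d : ℕ} {Ω : Set (Euc d)} (hΩ : IsOpen Ω)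
    {H : Euc d → ℝ} (hH : ContDiffOn ℝ 2 H Ω)
    {V : Euc d → ℝ} (hVdef : ∀ x, V x = Ω.indicator (fun y => Real.exp (H y / 2)) x)
    {x : Euc d} (hx : x ∈ Ω) :
    HasFDerivAt V (((1/2) * V x) • fderiv ℝ H x) x := by
  have hmem := hΩ.mem_nhds hx
  have hHd : DifferentiableAt ℝ H x :=
    (hH.contDiffAt hmem).differentiableAt (by norm_num)
  have h2 : HasFDerivAt (fun z => H z / 2) ((1/2 : ℝ) • fderiv ℝ H x) x := by
    simpa [Pi.smul_def, div_eq_inv_mul, smul_eq_mul, one_div, mul_comm] using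
      hHd.hasFDerivAt.const_smul (2⁻¹ : ℝ)
  have h3 := h2.exp
  have hVx : V x = Real.exp (H x / 2) := by rw [hVdef, Set.indicator_of_mem hx]
  have h4 : HasFDerivAt V (Real.exp (H x / 2) • ((1/2 : ℝ) • fderiv ℝ H x)) x := by
    refine h3.congr_of_eventuallyEq ?_
    filter_upwards [hmem] with y hy
    rw [hVdef, Set.indicator_of_mem hy]
  simpa [smul_smul, hVx, mul_comm] using h4

private lemma morse_LGen_eq {d : ℕ} {Ω : Set (Euc d)} (hΩ : IsOpen Ω)
    {H : Euc d → ℝ} (hH : ContDiffOn ℝ 2 H Ω)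
    {V : Euc d → ℝ} (hVdef : ∀ x, V x = Ω.indicator (fun y => Real.exp (H y / 2)) x)
    {ν : Euc d → ℝ} {Z : ℝ} (hZ : 0 < Z)
    (hνdef : ∀ x, ν x = Ω.indicator (fun y => Z⁻¹ * Real.exp (-H y)) x)
    {x : Euc d} (hx : x ∈ Ω) :
    lap V x = ((1/4) * ‖gradient H x‖ ^ 2 + (1/2) * lap H x) * V x ∧
    LGen ν V x = (-(1/4) * ‖gradient H x‖ ^ 2 + (1/2) * lap H x) * V x := by
  have hmem := hΩ.mem_nhds hx
  have hHx : ContDiffAt ℝ 2 H x := hH.contDiffAt hmem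
  have hHd : DifferentiableAt ℝ H x := hHx.differentiableAt (by norm_num)
  have hgV : gradient V x = ((1/2) * V x) • gradient H x := by
    rw [gradient, gradient, (morse_hasFDerivV hΩ hH hVdef hx).fderiv, _root_.map_smul]
  have hgL : gradient (fun y => Real.log (ν y)) x = -gradient H x := by
    have hf : HasFDerivAt (fun y => Real.log (ν y)) (-(fderiv ℝ H x)) x := by
      have base : HasFDerivAt (fun y => Real.log Z⁻¹ + -H y) (-(fderiv ℝ H x)) x := by
        simpa using (hHd.hasFDerivAt.neg).const_add (Real.log Z⁻¹)
      refine base.congr_of_eventuallyEq ?_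
      filter_upwards [hmem] with y hy
      rw [hνdef, Set.indicator_of_mem hy, Real.log_mul (by positivity) (Real.exp_pos _).ne',
        Real.log_exp]
    rw [gradient, hf.fderiv, map_neg, gradient]
  have hDH : DifferentiableAt ℝ (fderiv ℝ H) x :=
    (hHx.fderiv_right (m := 1) (by norm_num)).differentiableAt (by norm_num)
  have hlapV : lap V x = ((1/4) * ‖gradient H x‖ ^ 2 + (1/2) * lap H x) * V x := by
    have key : ∀ i : Fin d,
        fderiv ℝ (fun y => fderiv ℝ V y (EuclideanSpace.single i 1)) x (EuclideanSpace.single i 1)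
        = (1/4) * V x * (fderiv ℝ H x (EuclideanSpace.single i 1)) ^ 2
          + (1/2) * V x * fderiv ℝ (fun y => fderiv ℝ H y (EuclideanSpace.single i 1)) x
              (EuclideanSpace.single i 1) := by
      intro i
      set e : Euc d := EuclideanSpace.single i 1 with he
      have hde : DifferentiableAt ℝ (fun y => fderiv ℝ H y e) x := by
        exact (ContinuousLinearMap.apply ℝ ℝ e).differentiableAt.comp x hDH
      have hVd : DifferentiableAt ℝ V x := (morse_hasFDerivV hΩ hH hVdef hx).differentiableAt
      have hc : HasFDerivAt (fun y => (1/2 : ℝ) * V y) ((1/2 : ℝ) • fderiv ℝ V x) x := by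
        simpa [Pi.smul_def, smul_eq_mul] using hVd.hasFDerivAt.const_smul (1/2 : ℝ)
      have hmul := hc.mul hde.hasFDerivAt
      have heq : (fun y => fderiv ℝ V y e) =ᶠ[nhds x]
          (fun y => ((1/2) * V y) * fderiv ℝ H y e) := by
        filter_upwards [hmem] with y hy
        rw [(morse_hasFDerivV hΩ hH hVdef hy).fderiv]
        simp [smul_eq_mul]
      rw [heq.fderiv_eq, show (fun y => (1/2 : ℝ) * V y * fderiv ℝ H y e) =
          ((fun y => (1/2 : ℝ) * V y) * fun y => fderiv ℝ H y e) from rfl, hmul.fderiv]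
      have hfV : fderiv ℝ V x e = (1/2) * V x * fderiv ℝ H x e := by
        rw [(morse_hasFDerivV hΩ hH hVdef hx).fderiv]; simp [smul_eq_mul]
      simp only [ContinuousLinearMap.add_apply, ContinuousLinearMap.smul_apply, smul_eq_mul, hfV]
      ring
    rw [lap]
    simp only [key]
    rw [Finset.sum_add_distrib, ← Finset.mul_sum, ← Finset.mul_sum]
    have hS : ∑ i : Fin d, (fderiv ℝ H x (EuclideanSpace.single i 1)) ^ 2
        = ‖gradient H x‖ ^ 2 := by
      rw [morse_norm_sq_eq]
      exact Finset.sum_congr rfl fun i _ => by rw [morse_inner_grad]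
    rw [hS, lap]
    ring
  refine ⟨hlapV, ?_⟩
  rw [LGen, hgV, hgL, real_inner_smul_left, inner_neg_right, real_inner_self_eq_norm_sq, hlapV]
  ring

private lemma morse_lap_continuous {d : ℕ} {V : Euc d → ℝ} (hV : ContDiff ℝ 2 V) :
    Continuous (lap V) := by
  refine continuous_finset_sum _ fun i _ => ?_
  set e : Euc d := EuclideanSpace.single i 1
  have h1 : ContDiff ℝ 1 (fun y => fderiv ℝ V y e) :=
    (ContinuousLinearMap.apply ℝ ℝ e).contDiff.comp (hV.fderiv_right (m := 1) (by norm_num))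
  exact ((ContinuousLinearMap.apply ℝ ℝ e).continuous).comp
    (h1.continuous_fderiv (by norm_num))

/-- Lyapunov functions from Morse-type estimates: for
`V = exp(H/2)` on `Ω` (extended by `0`) and `ν ∝ exp(−H)` on `Ω`, the drift estimate
`(1/2)ΔH − (1/4)‖∇H‖² ≤ −λ₀` off `B` yields
`L_ν V = (−(1/4)‖∇H‖² + (1/2)ΔH)·V ≤ −λ₀ V + h·1_B` on `Ω`, where `h` is the
supremum of `(−(1/4)‖∇H‖² + (1/2)ΔH + λ₀)·V` over `B`. -/
theorem morse_lyapunov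
    (d : ℕ) (hd : 1 ≤ d) (Ω : Set (Euc d)) (hΩ : IsOpen Ω)
    (H : Euc d → ℝ) (hH : ContDiffOn ℝ 2 H Ω)
    (V : Euc d → ℝ) (hVdef : ∀ x, V x = Ω.indicator (fun y => Real.exp (H y / 2)) x)
    (hV : ContDiff ℝ 2 V)
    (B : Set (Euc d)) (hBΩ : B ⊆ Ω) (hBb : Bornology.IsBounded B)
    (lam0 : ℝ) (hlam0 : 0 < lam0)
    (hdrift : ∀ x ∈ Ω \ B, (1 / 2) * lap H x - (1 / 4) * ‖gradient H x‖ ^ 2 ≤ -lam0)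
    (ν : Euc d → ℝ) (hν : IsDensity ν) (Z : ℝ) (hZ : 0 < Z)
    (hνdef : ∀ x, ν x = Ω.indicator (fun y => Z⁻¹ * Real.exp (-H y)) x)
    (h : ℝ)
    (hh : h = sSup
      ((fun x => (-(1 / 4) * ‖gradient H x‖ ^ 2 + (1 / 2) * lap H x + lam0) * V x) '' B)) :
    ∀ x ∈ Ω,
      LGen ν V x = (-(1 / 4) * ‖gradient H x‖ ^ 2 + (1 / 2) * lap H x) * V x ∧
      LGen ν V x ≤ -lam0 * V x + h * B.indicator 1 x := by
  have hVnn : ∀ x, 0 ≤ V x := by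
    intro x
    rw [hVdef]
    exact Set.indicator_nonneg (fun y _ => (Real.exp_pos _).le) x
  intro x hx
  obtain ⟨hlapVx, hLGx⟩ := morse_LGen_eq hΩ hH hVdef hZ hνdef hx
  refine ⟨hLGx, ?_⟩
  by_cases hxB : x ∈ B
  · -- x ∈ B : use the supremum bound
    rw [Set.indicator_of_mem hxB, Pi.one_apply, mul_one]
    have hmemim : (-(1 / 4) * ‖gradient H x‖ ^ 2 + (1 / 2) * lap H x + lam0) * V x ∈
        (fun x => (-(1 / 4) * ‖gradient H x‖ ^ 2 + (1 / 2) * lap H x + lam0) * V x) '' B :=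
      Set.mem_image_of_mem _ hxB
    have hbdd : BddAbove
        ((fun x => (-(1 / 4) * ‖gradient H x‖ ^ 2 + (1 / 2) * lap H x + lam0) * V x) '' B) := by
      obtain ⟨r, hr⟩ := hBb.subset_closedBall (0 : Euc d)
      have hcomp : IsCompact (Metric.closedBall (0 : Euc d) r) := isCompact_closedBall _ _
      have hcont : Continuous fun z => lap V z + lam0 * V z :=
        (morse_lap_continuous hV).add (continuous_const.mul hV.continuous)
      obtain ⟨M, hM⟩ := (hcomp.bddAbove_image hcont.continuousOn)
      refine ⟨M, ?_⟩
      rintro y ⟨z, hzB, rfl⟩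
      have hzΩ : z ∈ Ω := hBΩ hzB
      obtain ⟨hlapVz, _⟩ := morse_LGen_eq hΩ hH hVdef hZ hνdef hzΩ
      have hle : (-(1 / 4) * ‖gradient H z‖ ^ 2 + (1 / 2) * lap H z + lam0) * V z
          ≤ lap V z + lam0 * V z := by
        have h1 : 0 ≤ ‖gradient H z‖ ^ 2 * V z := mul_nonneg (sq_nonneg _) (hVnn z)
        nlinarith [hlapVz, hVnn z]
      exact hle.trans (hM (Set.mem_image_of_mem _ (hr hzB)))
    have hxle := le_csSup hbdd hmemim
    rw [hh]
    nlinarith [hxle]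
  · -- x ∉ B : use the drift estimate
    rw [Set.indicator_of_notMem hxB, mul_zero, add_zero, hLGx]
    have hd := hdrift x ⟨hx, hxB⟩
    nlinarith [mul_le_mul_of_nonneg_right hd (hVnn x)]

end
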